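/- arXiv:2011.02710 — 3 statements merged into one kernel-verified Lean document; each statement's English description precedes it below -/
import Mathlib

section
/- Let μ be a positive Borel measure on ℝ with ∫ exp(δ|x|) dμ < ∞ for some δ > 0. If f, g ∈ L²(μ) are nonnegative-measure densities with the same moments, i.e. ∫ x^n f(x) dμ(x) = ∫ x^n g(x) dμ(x) for all n ≥ 0, then f = g μ-almost everywhere. -/
open MeasureTheory Real

lemma one_half_ennreal : (1:ENNReal)/1 = 1/2 + 1/2 := by
  simp only [one_div, inv_one, ENNReal.inv_two_add_inv_two]

lemma l2_mul_int {μ : Measure ℝ} {φ ψ : ℝ → ℝ} (hφ : MemLp φ 2 μ) (hψ : MemLp ψ 2 μ) :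
    Integrable (fun x => φ x * ψ x) μ := by
  have h1 : MemLp (φ • ψ) 1 μ := hψ.smul hφ
  exact memLp_one_iff_integrable.mp h1

lemma memL2_pow_exp {μ : Measure ℝ} {δ : ℝ} (hδ : 0 < δ)
    (hexp : Integrable (fun x => Real.exp (δ * |x|)) μ)
    (m : ℕ) {c : ℝ} (hc : 0 ≤ c) (h2c : 2*c < δ) :
    MemLp (fun x => |x|^m * Real.exp (c*|x|)) 2 μ := by
  have hcont : Continuous fun x:ℝ => |x|^m * Real.exp (c*|x|) := by fun_prop
  rw [memLp_two_iff_integrable_sq hcont.aestronglyMeasurable]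
  set ε : ℝ := δ - 2*c with hε
  have hεpos : 0 < ε := by simp only [hε]; linarith
  refine (hexp.const_mul ((Nat.factorial (2*m) : ℝ) / ε^(2*m))).mono'
    ((hcont.mul hcont).aestronglyMeasurable.congr ?_) ?_
  · filter_upwards with x; rw [sq]; rfl
  filter_upwards with x
  have hx : (0:ℝ) ≤ |x| := abs_nonneg x
  have h1 : (ε*|x|) ^ (2*m) / (Nat.factorial (2*m) : ℝ) ≤ Real.exp (ε*|x|) :=
    Real.pow_div_factorial_le_exp _ (mul_nonneg hεpos.le hx) _
  have hfac : (0:ℝ) < (Nat.factorial (2*m) : ℝ) := by positivity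
  have h2 : |x|^(2*m) ≤ (Nat.factorial (2*m) : ℝ) / ε^(2*m) * Real.exp (ε*|x|) := by
    rw [div_le_iff₀ hfac, mul_pow] at h1
    rw [div_mul_eq_mul_div, le_div_iff₀ (by positivity)]
    calc |x|^(2*m) * ε^(2*m) = ε ^ (2*m) * |x|^(2*m) := by ring
    _ ≤ Real.exp (ε*|x|) * (Nat.factorial (2*m):ℝ) := h1
    _ = (Nat.factorial (2*m):ℝ) * Real.exp (ε*|x|) := by ring
  have e2 : Real.exp (ε*|x|) * Real.exp (2*c*|x|) = Real.exp (δ*|x|) := by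
    rw [← Real.exp_add]; congr 1; simp only [hε]; ring
  have e1 : (|x|^m * Real.exp (c*|x|))^2 = |x|^(2*m) * Real.exp (2*c*|x|) := by
    rw [mul_pow, ← pow_mul, ← Real.exp_nat_mul]
    norm_num; ring_nf
  rw [Real.norm_eq_abs, abs_of_nonneg (by positivity), e1]
  calc |x|^(2*m) * Real.exp (2*c*|x|)
      ≤ ((Nat.factorial (2*m) : ℝ) / ε^(2*m) * Real.exp (ε*|x|)) * Real.exp (2*c*|x|) := by
        apply mul_le_mul_of_nonneg_right h2 (Real.exp_nonneg _)
    _ = (Nat.factorial (2*m) : ℝ) / ε^(2*m) * Real.exp (δ*|x|) := by rw [mul_assoc, e2]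

lemma int_pow_exp_mul {μ : Measure ℝ} {δ : ℝ} (hδ : 0 < δ)
    (hexp : Integrable (fun x => Real.exp (δ * |x|)) μ)
    {h : ℝ → ℝ} (hh : MemLp h 2 μ) (m : ℕ) {c : ℝ} (hc : 0 ≤ c) (h2c : 2*c < δ) :
    Integrable (fun x => |x|^m * Real.exp (c*|x|) * |h x|) μ :=
  l2_mul_int (memL2_pow_exp hδ hexp m hc h2c) hh.norm



lemma step_lemma {μ : Measure ℝ} {δ : ℝ} (hδ : 0 < δ)
    (hexp : Integrable (fun x => Real.exp (δ * |x|)) μ)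
    {h : ℝ → ℝ} (hh : MemLp h 2 μ) {t s : ℝ} (hs : |s| ≤ δ/4)
    (H : ∀ n : ℕ, ∫ x, (x:ℂ)^n * Complex.exp ((t:ℂ)*x*Complex.I) * (h x:ℂ) ∂μ = 0)
    (m : ℕ) :
    ∫ x, (x:ℂ)^m * Complex.exp (((t+s:ℝ):ℂ)*x*Complex.I) * (h x:ℂ) ∂μ = 0 := by
  have h2s : 2*|s| < δ := by
    have := abs_nonneg s; linarith
  set F : ℕ → ℝ → ℂ := fun n x =>
    ((s:ℂ)*Complex.I)^n / (Nat.factorial n : ℂ) *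
      ((x:ℂ)^(m+n) * Complex.exp ((t:ℂ)*x*Complex.I) * (h x:ℂ)) with hF
  set bound : ℕ → ℝ → ℝ := fun n x =>
    (|s| * |x|)^n / (Nat.factorial n : ℝ) * (|x|^m * |h x|) with hb
  have hmeas : ∀ n, AEStronglyMeasurable (F n) μ := by
    intro n
    exact (((Continuous.aestronglyMeasurable (by fun_prop :
      Continuous fun x:ℝ => (x:ℂ)^(m+n) * Complex.exp ((t:ℂ)*x*Complex.I))).mul
      (Complex.continuous_ofReal.comp_aestronglyMeasurable hh.aestronglyMeasurable)).const_mul _)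
  have h_bound : ∀ n, ∀ᵐ x ∂μ, ‖F n x‖ ≤ bound n x := by
    intro n
    filter_upwards with x
    have : ‖F n x‖ = |s|^n / (Nat.factorial n : ℝ) * (|x|^(m+n) * 1 * |h x|) := by
      simp only [hF, norm_mul, norm_div, norm_pow, map_mul,
        Complex.norm_real, Complex.norm_I, Complex.norm_natCast, mul_one]
      rw [← Complex.ofReal_mul, Complex.norm_exp_ofReal_mul_I]
      simp [abs_abs]
    rw [this]
    have e : (|s| * |x|)^n / (Nat.factorial n : ℝ) * (|x|^m * |h x|)
        = |s|^n / (Nat.factorial n : ℝ) * (|x|^(m+n) * 1 * |h x|) := by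
      rw [mul_pow, pow_add]; ring
    exact le_of_eq (by rw [hb]; exact e.symm)
  have h_summ : ∀ᵐ x ∂μ, Summable fun n => bound n x := by
    filter_upwards with x
    exact (Real.summable_pow_div_factorial (|s| * |x|)).mul_right _
  have h_int : Integrable (fun x => ∑' n, bound n x) μ := by
    have e : ∀ x : ℝ, ∑' n, bound n x = |x|^m * Real.exp (|s| * |x|) * |h x| := by
      intro x
      rw [((NormedSpace.expSeries_div_hasSum_exp (|s| * |x|)).mul_right (|x|^m * |h x|)).tsum_eq,
        ← Real.exp_eq_exp_ℝ]
      ring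
    exact (int_pow_exp_mul hδ hexp hh m (abs_nonneg s) h2s).congr
      (Filter.Eventually.of_forall fun x => (e x).symm)
  have h_lim : ∀ᵐ x ∂μ, HasSum (fun n => F n x)
      ((x:ℂ)^m * Complex.exp (((t+s:ℝ):ℂ)*x*Complex.I) * (h x:ℂ)) := by
    filter_upwards with x
    have h1 := (NormedSpace.expSeries_div_hasSum_exp ((s:ℂ)*x*Complex.I)).mul_right
      ((x:ℂ)^m * Complex.exp ((t:ℂ)*x*Complex.I) * (h x:ℂ))
    have e1 : (fun n => F n x) = fun n => ((s:ℂ)*x*Complex.I)^n / (Nat.factorial n : ℂ) *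
        ((x:ℂ)^m * Complex.exp ((t:ℂ)*x*Complex.I) * (h x:ℂ)) := by
      funext n
      simp only [hF, pow_add]
      rw [mul_pow ((s:ℂ)) _, mul_pow]
      ring
    have e2 : (x:ℂ)^m * Complex.exp (((t+s:ℝ):ℂ)*x*Complex.I) * (h x:ℂ)
        = NormedSpace.exp ((s:ℂ)*x*Complex.I) *
          ((x:ℂ)^m * Complex.exp ((t:ℂ)*x*Complex.I) * (h x:ℂ)) := by
      rw [← Complex.exp_eq_exp_ℂ,
        show ((t+s:ℝ):ℂ)*x*Complex.I = (s:ℂ)*x*Complex.I + (t:ℂ)*x*Complex.I by push_cast; ring,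
        Complex.exp_add]
      ring
    rw [e1, e2]
    exact h1
  have hsum := hasSum_integral_of_dominated_convergence bound hmeas h_bound h_summ h_int h_lim
  have hzero : ∀ n, ∫ x, F n x ∂μ = 0 := by
    intro n
    simp only [hF]
    rw [integral_const_mul, H (m+n), mul_zero]
  have h0 : HasSum (fun n : ℕ => (0:ℂ)) (∫ x, (x:ℂ)^m * Complex.exp (((t+s:ℝ):ℂ)*x*Complex.I) * (h x:ℂ) ∂μ) := by
    simpa [hzero] using hsum
  exact (h0.unique hasSum_zero)

lemma char_zero {μ : Measure ℝ} {δ : ℝ} (hδ : 0 < δ)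
    (hexp : Integrable (fun x => Real.exp (δ * |x|)) μ)
    {h : ℝ → ℝ} (hh : MemLp h 2 μ)
    (hbase : ∀ n : ℕ, ∫ x, (x:ℂ)^n * (h x:ℂ) ∂μ = 0)
    (t : ℝ) (n : ℕ) :
    ∫ x, (x:ℂ)^n * Complex.exp ((t:ℂ)*x*Complex.I) * (h x:ℂ) ∂μ = 0 := by
  have key : ∀ k : ℕ, ∀ u : ℝ, |u| ≤ k * (δ/4) → ∀ m : ℕ,
      ∫ x, (x:ℂ)^m * Complex.exp ((u:ℂ)*x*Complex.I) * (h x:ℂ) ∂μ = 0 := by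
    intro k
    induction k with
    | zero =>
      intro u hu m
      have h0 : |u| ≤ 0 := by simpa using hu
      have hu0 : u = 0 := abs_eq_zero.mp (le_antisymm h0 (abs_nonneg u))
      subst hu0
      simpa using hbase m
    | succ k ih =>
      intro u hu m
      set a : ℝ := k * (δ/4) with ha
      have ha0 : 0 ≤ a := by positivity
      push_cast at hu
      have hexp4 : (↑k + 1 : ℝ) * (δ/4) = a + δ/4 := by rw [ha]; ring
      rw [hexp4] at hu
      have hu2 := abs_le.mp hu
      set u' : ℝ := max (-a) (min a u) with hu'
      have h1 : |u'| ≤ a := by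
        rw [abs_le]
        constructor
        · exact le_max_left _ _
        · rw [max_le_iff]
          exact ⟨by linarith, (min_le_left _ _)⟩
      have h2 : |u - u'| ≤ δ/4 := by
        rw [abs_le]
        rcases le_total u (-a) with hc | hc
        · have : u' = -a := by
            rw [hu', min_eq_right (by linarith), max_eq_left (by linarith)]
          rw [this]
          constructor <;> [linarith [hu2.1]; linarith [hu2.1]]
        · rcases le_total a u with hc2 | hc2
          · have : u' = a := by
              rw [hu', min_eq_left hc2, max_eq_right (by linarith)]
            rw [this]
            constructor <;> [linarith [hu2.2]; linarith [hu2.2]]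
          · have : u' = u := by
              rw [hu', min_eq_right hc2, max_eq_right hc]
            rw [this, sub_self]
            constructor <;> linarith
      have hstep := step_lemma hδ hexp hh h2 (fun n => ih u' h1 n) m
      simpa using hstep
  obtain ⟨k, hk⟩ := exists_nat_ge (|t| / (δ/4))
  have : |t| ≤ k * (δ/4) := by
    rw [div_le_iff₀ (by linarith)] at hk
    linarith
  exact key k t this n

lemma circle_int_zero {μ : Measure ℝ} {h : ℝ → ℝ} (hint : Integrable h μ)
    {T : ℝ} (hT : 0 < T)
    (hchar : ∀ t : ℝ, ∫ x, Complex.exp ((t:ℂ)*x*Complex.I) * (h x:ℂ) ∂μ = 0)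
    (W : C(AddCircle T, ℂ)) :
    ∫ x : ℝ, W (x : AddCircle T) * (h x:ℂ) ∂μ = 0 := by
  haveI : Fact (0 < T) := ⟨hT⟩
  have hhC : Integrable (fun x : ℝ => (h x : ℂ)) μ := hint.ofReal
  have habs : Integrable (fun x : ℝ => |h x|) μ := hint.abs
  have hInt : ∀ V : C(AddCircle T, ℂ),
      Integrable (fun x : ℝ => V (x : AddCircle T) * (h x:ℂ)) μ := by
    intro V
    refine hhC.bdd_mul (c := ‖V‖)
      ((V.continuous.comp continuous_quotient_mk').aestronglyMeasurable) ?_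
    filter_upwards with x
    exact V.norm_coe_le_norm _
  set Φlin : C(AddCircle T, ℂ) →ₗ[ℂ] ℂ :=
    { toFun := fun V => ∫ x : ℝ, V (x : AddCircle T) * (h x:ℂ) ∂μ
      map_add' := by
        intro V1 V2
        simp only [ContinuousMap.add_apply, add_mul]
        exact integral_add (hInt V1) (hInt V2)
      map_smul' := by
        intro c V
        simp only [ContinuousMap.smul_apply, smul_eq_mul, mul_assoc, RingHom.id_apply]
        rw [integral_const_mul] } with hΦlin
  have hbound : ∀ V : C(AddCircle T, ℂ), ‖Φlin V‖ ≤ (∫ x, |h x| ∂μ) * ‖V‖ := by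
    intro V
    calc ‖Φlin V‖ ≤ ∫ x, ‖V (x : AddCircle T) * (h x:ℂ)‖ ∂μ := norm_integral_le_integral_norm _
    _ ≤ ∫ x, ‖V‖ * |h x| ∂μ := by
        refine integral_mono (hInt V).norm (habs.const_mul _) ?_
        intro x
        show ‖V (x : AddCircle T) * (h x:ℂ)‖ ≤ ‖V‖ * |h x|
        rw [norm_mul, Complex.norm_real, Real.norm_eq_abs]
        exact mul_le_mul_of_nonneg_right (V.norm_coe_le_norm _) (abs_nonneg _)
    _ = (∫ x, |h x| ∂μ) * ‖V‖ := by rw [integral_const_mul]; ring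
  set Φ : C(AddCircle T, ℂ) →L[ℂ] ℂ := Φlin.mkContinuous _ hbound with hΦ
  have hker : Submodule.span ℂ (Set.range (@fourier T)) ≤ Φ.ker := by
    rw [Submodule.span_le]
    rintro _ ⟨nn, rfl⟩
    rw [SetLike.mem_coe, LinearMap.mem_ker]
    show (∫ x : ℝ, (fourier nn) (x : AddCircle T) * (h x:ℂ) ∂μ) = 0
    have : ∀ x : ℝ, (fourier nn) (x : AddCircle T) * (h x:ℂ)
        = Complex.exp (((2*π*nn/T : ℝ):ℂ)*x*Complex.I) * (h x:ℂ) := by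
      intro x
      rw [fourier_coe_apply]
      congr 2
      push_cast
      ring
    rw [integral_congr_ae (Filter.Eventually.of_forall this)]
    exact hchar _
  have hclosed : IsClosed (Φ.ker : Set C(AddCircle T, ℂ)) :=
    ContinuousLinearMap.isClosed_ker Φ
  have htop : (⊤ : Submodule ℂ C(AddCircle T, ℂ)) ≤ Φ.ker := by
    rw [← span_fourier_closure_eq_top]
    exact Submodule.topologicalClosure_minimal _ hker hclosed
  have : Φ W = 0 := LinearMap.mem_ker.mp (htop Submodule.mem_top)
  exact this

lemma test_zero {μ : Measure ℝ} {h : ℝ → ℝ} (hint : Integrable h μ)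
    (hchar : ∀ t : ℝ, ∫ x, Complex.exp ((t:ℂ)*x*Complex.I) * (h x:ℂ) ∂μ = 0)
    {ψ : ℝ → ℝ} (hψc : Continuous ψ) (hψs : HasCompactSupport ψ) :
    ∫ x, ψ x * h x ∂μ = 0 := by
  obtain ⟨C, hC⟩ := hψs.exists_bound_of_continuous hψc
  obtain ⟨r, hr⟩ := hψs.isBounded.subset_closedBall 0
  set R : ℝ := max r 0 with hR
  have hR0 : 0 ≤ R := le_max_right _ _
  have hψ0 : ∀ y : ℝ, R < |y| → ψ y = 0 := by
    intro y hy
    apply image_eq_zero_of_notMem_tsupport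
    intro hmem
    have := hr hmem
    rw [Metric.mem_closedBall, Real.dist_eq, sub_zero] at this
    have : |y| ≤ R := le_trans this (le_max_left _ _)
    linarith
  set T : ℕ → ℝ := fun k => 2*R + 2 + k with hT
  have hTpos : ∀ k : ℕ, 0 < T k := by
    intro k; simp only [hT]; positivity
  -- the lifted periodic function
  set F : ℕ → ℝ → ℂ := fun k x =>
    (@AddCircle.liftIco ℝ ℂ _ (T k) _ _ ⟨hTpos k⟩ (-(T k)/2) _ (fun y => (ψ y:ℂ)))
      (x : AddCircle (T k)) * (h x:ℂ) with hF
  have hend : ∀ k : ℕ, ψ (-(T k)/2) = 0 ∧ ψ (-(T k)/2 + T k) = 0 := by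
    intro k
    have hk0 : (0:ℝ) ≤ k := Nat.cast_nonneg k
    constructor
    · apply hψ0; rw [abs_of_nonpos (by simp only [hT]; linarith)]; simp only [hT]; linarith
    · apply hψ0; rw [abs_of_nonneg (by simp only [hT]; linarith)]; simp only [hT]; linarith
  have hWcont : ∀ k : ℕ, Continuous
      (@AddCircle.liftIco ℝ ℂ _ (T k) _ _ ⟨hTpos k⟩ (-(T k)/2) _ (fun y => (ψ y:ℂ))) := by
    intro k
    apply AddCircle.liftIco_continuous (p := T k) (a := -(T k)/2) (hp := ⟨hTpos k⟩)
    · show ((ψ (-(T k)/2) : ℝ) : ℂ) = ((ψ (-(T k)/2 + T k) : ℝ) : ℂ)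
      rw [(hend k).1, (hend k).2]
    · exact (Complex.continuous_ofReal.comp hψc).continuousOn
  have hzero : ∀ k : ℕ, ∫ x, F k x ∂μ = 0 := by
    intro k
    haveI : Fact (0 < T k) := ⟨hTpos k⟩
    exact circle_int_zero hint (hTpos k) hchar ⟨_, hWcont k⟩
  have hmeas : ∀ k : ℕ, AEStronglyMeasurable (F k) μ := by
    intro k
    exact ((hWcont k).comp continuous_quotient_mk').aestronglyMeasurable.mul
      (Complex.continuous_ofReal.comp_aestronglyMeasurable hint.aestronglyMeasurable)
  have hbnd : ∀ k : ℕ, ∀ᵐ x ∂μ, ‖F k x‖ ≤ C * |h x| := by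
    intro k
    filter_upwards with x
    rw [hF]
    simp only [norm_mul, Complex.norm_real, Real.norm_eq_abs]
    apply mul_le_mul_of_nonneg_right _ (abs_nonneg _)
    · show ‖_‖ ≤ C
      rw [AddCircle.liftIco]
      simp only [Function.comp_apply, Set.restrict_apply]
      rw [Complex.norm_real]
      exact hC _
  have hlim : ∀ᵐ x ∂μ, Filter.Tendsto (fun k => F k x) Filter.atTop (nhds ((ψ x:ℂ) * (h x:ℂ))) := by
    filter_upwards with x
    apply Filter.Tendsto.congr' _ tendsto_const_nhds
    rw [Filter.EventuallyEq, Filter.eventually_atTop]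
    refine ⟨Nat.ceil (2*|x|), fun k hk => ?_⟩
    have hkx : 2*|x| ≤ k := le_trans (Nat.le_ceil _) (Nat.cast_le.mpr hk)
    have hxT : |x| < T k / 2 := by
      simp only [hT]
      have := abs_nonneg x
      nlinarith
    have hmem : x ∈ Set.Ico (-(T k)/2) (-(T k)/2 + T k) := by
      have := abs_lt.mp hxT
      constructor
      · linarith [this.1]
      · linarith [this.2]
    have := AddCircle.liftIco_coe_apply (p := T k) (hp := ⟨hTpos k⟩) (a := -(T k)/2) (f := fun y => (ψ y:ℂ)) hmem
    simp only [hF, this]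
  have hdom : Filter.Tendsto (fun k => ∫ x, F k x ∂μ) Filter.atTop
      (nhds (∫ x, (ψ x:ℂ) * (h x:ℂ) ∂μ)) := by
    refine tendsto_integral_filter_of_dominated_convergence (fun x => C * |h x|)
      (Filter.Eventually.of_forall hmeas) (Filter.Eventually.of_forall hbnd)
      (hint.abs.const_mul C) hlim
  have hC0 : ∫ x, (ψ x:ℂ) * (h x:ℂ) ∂μ = 0 :=
    tendsto_nhds_unique hdom (by simp only [hzero]; exact tendsto_const_nhds)
  have e : ∫ x, ((ψ x * h x : ℝ):ℂ) ∂μ = ∫ x, (ψ x:ℂ) * (h x:ℂ) ∂μ := by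
    apply integral_congr_ae
    filter_upwards with x
    push_cast
    ring
  have hu : Integrable (fun x => ψ x * h x) μ :=
    hint.bdd_mul hψc.aestronglyMeasurable (Filter.Eventually.of_forall hC)
  have e2 := ContinuousLinearMap.integral_comp_comm Complex.ofRealCLM hu
  simp only [Complex.ofRealCLM_apply] at e2
  rw [e, hC0] at e2
  exact Complex.ofReal_eq_zero.mp e2.symm

theorem density_determined_by_moments
    (μ : Measure ℝ) (δ : ℝ) (hδ : 0 < δ)
    (hexp : Integrable (fun x => Real.exp (δ * |x|)) μ)
    (f g : ℝ → ℝ)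
    (hf : MemLp f 2 μ) (hg : MemLp g 2 μ)
    (hf0 : 0 ≤ᵐ[μ] f) (hg0 : 0 ≤ᵐ[μ] g)
    (hmom : ∀ n : ℕ, ∫ x, x ^ n * f x ∂μ = ∫ x, x ^ n * g x ∂μ) :
    f =ᵐ[μ] g := by
  haveI : IsFiniteMeasure μ := by
    have h1 : Integrable (fun _ : ℝ => (1:ℝ)) μ := by
      refine hexp.mono' aestronglyMeasurable_const ?_
      filter_upwards with x
      rw [Real.norm_eq_abs, abs_one]
      exact Real.one_le_exp (by positivity)
    rcases integrable_const_iff.mp h1 with hc | hc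
    · norm_num at hc
    · exact hc
  set h : ℝ → ℝ := fun x => f x - g x with hdef
  have hh : MemLp h 2 μ := hf.sub hg
  have hint : Integrable h μ := hh.integrable (by norm_num)
  have hxn : ∀ n : ℕ, MemLp (fun x : ℝ => x^n) 2 μ := by
    intro n
    refine MemLp.of_le (memL2_pow_exp hδ hexp n (le_of_lt (by positivity : (0:ℝ) < δ/4))
      (by linarith)) ?_ ?_
    · exact (continuous_pow n).aestronglyMeasurable
    · filter_upwards with x
      have h1 : (0:ℝ) ≤ |x|^n * Real.exp (δ/4 * |x|) := by positivity
      rw [Real.norm_eq_abs, Real.norm_eq_abs, abs_pow, abs_of_nonneg h1]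
      nlinarith [Real.one_le_exp (by positivity : (0:ℝ) ≤ δ/4 * |x|),
        pow_nonneg (abs_nonneg x) n]
  have hbase : ∀ n : ℕ, ∫ x, (x:ℂ)^n * (h x:ℂ) ∂μ = 0 := by
    intro n
    have hif : Integrable (fun x => x^n * f x) μ := l2_mul_int (hxn n) hf
    have hig : Integrable (fun x => x^n * g x) μ := l2_mul_int (hxn n) hg
    have e : ∫ x, (x:ℂ)^n * (h x:ℂ) ∂μ
        = ∫ x, (((x^n * f x : ℝ):ℂ) - ((x^n * g x : ℝ):ℂ)) ∂μ := by
      apply integral_congr_ae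
      filter_upwards with x
      simp only [hdef]
      push_cast
      ring
    have hifC : Integrable (fun x => ((x^n * f x : ℝ):ℂ)) μ := hif.ofReal
    have higC : Integrable (fun x => ((x^n * g x : ℝ):ℂ)) μ := hig.ofReal
    rw [e, integral_sub hifC higC]
    have e1 := ContinuousLinearMap.integral_comp_comm Complex.ofRealCLM hif
    have e2 := ContinuousLinearMap.integral_comp_comm Complex.ofRealCLM hig
    simp only [Complex.ofRealCLM_apply] at e1 e2
    rw [e1, e2, hmom n, sub_self]
  have hchar : ∀ t : ℝ, ∫ x, Complex.exp ((t:ℂ)*x*Complex.I) * (h x:ℂ) ∂μ = 0 := by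
    intro t
    have := char_zero hδ hexp hh hbase t 0
    simpa using this
  have hψ : ∀ (ψ : ℝ → ℝ), ContDiff ℝ (⊤:ℕ∞) ψ → HasCompactSupport ψ →
      ∫ x, ψ x • h x ∂μ = 0 := by
    intro ψ hψd hψs
    simp only [smul_eq_mul]
    exact test_zero hint hchar hψd.continuous hψs
  have hzero : ∀ᵐ x ∂μ, h x = 0 :=
    ae_eq_zero_of_integral_contDiff_smul_eq_zero hint.locallyIntegrable hψ
  filter_upwards [hzero] with x hx
  simpa [hdef, sub_eq_zero] using hx
end

section
/- The probabilist Hermite polynomials satisfy the addition formula: for all real a with a² ≤ 1 and all real x, y, Hₙ(a x + √(1−a²) y) = Σ_{m=0}^n (n choose m) a^m (1−a²)^{(n−m)/2} H_m(x) H_{n−m}(y). -/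
open Real Finset
noncomputable def H : ℕ → ℝ → ℝ
  | 0, _ => 1
  | 1, x => x
  | (n + 2), x => x * H (n + 1) x - (n + 1) * H n x

lemma H_succ_succ (n : ℕ) (x : ℝ) : H (n+2) x = x * H (n+1) x - (n+1) * H n x := rfl

lemma xH : ∀ (m : ℕ) (x : ℝ), x * H m x = H (m+1) x + m * H (m-1) x
  | 0, x => by simp [H]
  | (k+1), x => by
      show x * H (k+1) x = H (k+2) x + ((k+1:ℕ):ℝ) * H k x
      rw [H_succ_succ]; push_cast; ring

lemma sum_step (a b x y : ℝ) (hab : a^2 + b^2 = 1) (n : ℕ) :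
    (a*x+b*y) * (∑ m ∈ range (n+2), ((n+1).choose m : ℝ) * a^m * b^(n+1-m) * H m x * H (n+1-m) y)
      - ((n:ℝ)+1) * (∑ m ∈ range (n+1), (n.choose m : ℝ) * a^m * b^(n-m) * H m x * H (n-m) y)
    = ∑ m ∈ range (n+3), ((n+2).choose m : ℝ) * a^m * b^(n+2-m) * H m x * H (n+2-m) y := by
  have expand : ∀ m ∈ range (n+2),
      (a*x+b*y) * (((n+1).choose m : ℝ) * a^m * b^(n+1-m) * H m x * H (n+1-m) y)
      = ((((n+1).choose m : ℝ) * a^(m+1) * b^(n+1-m) * H (m+1) x * H (n+1-m) y)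
        + (((n+1).choose m : ℝ) * (m:ℝ) * a^(m+1) * b^(n+1-m) * H (m-1) x * H (n+1-m) y))
        + ((((n+1).choose m : ℝ) * a^m * b^(n+2-m) * H m x * H (n+2-m) y)
        + (((n+1).choose m : ℝ) * ((n+1-m : ℕ) : ℝ) * a^m * b^(n+2-m) * H m x * H (n-m) y)) := by
    intro m hm
    have hm' : m ≤ n + 1 := by simpa [Nat.lt_succ_iff] using hm
    have h1 : n + 2 - m = (n + 1 - m) + 1 := by omega
    have e1 := xH m x
    have e2 := xH (n+1-m) y
    have h2 : n + 1 - m + 1 = n + 2 - m := by omega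
    have h3 : n + 1 - m - 1 = n - m := by omega
    rw [h2, h3] at e2
    rw [h1, pow_succ]
    rw [h1] at e2
    linear_combination (((n+1).choose m : ℝ) * a^(m+1) * b^(n+1-m) * H (n+1-m) y) * e1
      + (((n+1).choose m : ℝ) * a^m * b^(n+1-m) * b * H m x) * e2
  rw [Finset.mul_sum, Finset.sum_congr rfl expand, Finset.sum_add_distrib,
      Finset.sum_add_distrib, Finset.sum_add_distrib]
  -- B sum
  have hB : ∑ m ∈ range (n+2), ((n+1).choose m : ℝ) * (m:ℝ) * a^(m+1) * b^(n+1-m) * H (m-1) x * H (n+1-m) y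
      = ((n:ℝ)+1) * a^2 * ∑ m ∈ range (n+1), (n.choose m : ℝ) * a^m * b^(n-m) * H m x * H (n-m) y := by
    rw [Finset.sum_range_succ']
    simp only [Nat.cast_zero, mul_zero, zero_mul, add_zero, Nat.succ_sub_succ, Nat.add_sub_cancel, Nat.sub_zero]
    rw [Finset.mul_sum]
    refine Finset.sum_congr rfl fun k hk => ?_
    have hc : (((n+1).choose (k+1) : ℕ) : ℝ) * ((k:ℝ)+1) = ((n:ℝ)+1) * (n.choose k : ℕ) := by
      have := Nat.add_one_mul_choose_eq n k
      have := congrArg (Nat.cast (R := ℝ)) this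
      push_cast at this
      linarith [this]
    push_cast
    linear_combination (a^(k+2) * b^(n-k) * H k x * H (n-k) y) * hc
  -- D sum
  have hD : ∑ m ∈ range (n+2), ((n+1).choose m : ℝ) * ((n+1-m : ℕ) : ℝ) * a^m * b^(n+2-m) * H m x * H (n-m) y
      = ((n:ℝ)+1) * b^2 * ∑ m ∈ range (n+1), (n.choose m : ℝ) * a^m * b^(n-m) * H m x * H (n-m) y := by
    rw [Finset.sum_range_succ]
    simp only [Nat.sub_self, Nat.cast_zero, mul_zero, zero_mul, add_zero]
    rw [Finset.mul_sum]
    refine Finset.sum_congr rfl fun m hm => ?_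
    have hm' : m ≤ n := by simpa [Nat.lt_succ_iff] using hm
    have hc : (((n+1).choose m : ℕ) : ℝ) * ((n+1-m : ℕ) : ℝ) = ((n:ℝ)+1) * (n.choose m : ℕ) := by
      have h1 : (n+1).choose m * (n+1-m) = (n+1) * n.choose m := by
        rw [← Nat.choose_succ_right_eq (n+1) m]
        exact (Nat.add_one_mul_choose_eq n m).symm
      have := congrArg (Nat.cast (R := ℝ)) h1
      push_cast [Nat.cast_sub (by omega : m ≤ n+1)] at this ⊢
      linarith [this]
    have hpow : b^(n+2-m) = b^2 * b^(n-m) := by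
      rw [show n+2-m = (n-m)+2 by omega]; ring
    rw [hpow]
    linear_combination (a^m * b^2 * b^(n-m) * H m x * H (n-m) y) * hc
  -- A + C = S2
  have hAC : (∑ m ∈ range (n+2), ((n+1).choose m : ℝ) * a^(m+1) * b^(n+1-m) * H (m+1) x * H (n+1-m) y)
      + (∑ m ∈ range (n+2), ((n+1).choose m : ℝ) * a^m * b^(n+2-m) * H m x * H (n+2-m) y)
      = ∑ m ∈ range (n+3), ((n+2).choose m : ℝ) * a^m * b^(n+2-m) * H m x * H (n+2-m) y := by
    rw [Finset.sum_range_succ' (fun m => ((n+2).choose m : ℝ) * a^m * b^(n+2-m) * H m x * H (n+2-m) y) (n+2)]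
    have split : ∀ k ∈ range (n+2),
        ((n+2).choose (k+1) : ℝ) * a^(k+1) * b^(n+2-(k+1)) * H (k+1) x * H (n+2-(k+1)) y
        = ((n+1).choose k : ℝ) * a^(k+1) * b^(n+1-k) * H (k+1) x * H (n+1-k) y
          + ((n+1).choose (k+1) : ℝ) * a^(k+1) * b^(n+1-k) * H (k+1) x * H (n+1-k) y := by
      intro k hk
      have : n+2-(k+1) = n+1-k := by omega
      rw [this, Nat.choose_succ_succ (n+1) k]
      push_cast; ring
    rw [Finset.sum_congr rfl split, Finset.sum_add_distrib]
    have hC : ∑ m ∈ range (n+2), ((n+1).choose m : ℝ) * a^m * b^(n+2-m) * H m x * H (n+2-m) y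
        = (∑ k ∈ range (n+2), ((n+1).choose (k+1) : ℝ) * a^(k+1) * b^(n+1-k) * H (k+1) x * H (n+1-k) y)
          + ((n+2).choose 0 : ℝ) * a^0 * b^(n+2-0) * H 0 x * H (n+2-0) y := by
      rw [Finset.sum_range_succ'
        (fun m => ((n+1).choose m : ℝ) * a^m * b^(n+2-m) * H m x * H (n+2-m) y) (n+1)]
      rw [Finset.sum_range_succ
        (fun k => ((n+1).choose (k+1) : ℝ) * a^(k+1) * b^(n+1-k) * H (k+1) x * H (n+1-k) y) (n+1)]
      have hz : ((n+1).choose (n+2) : ℝ) = 0 := by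
        rw [Nat.choose_eq_zero_of_lt (by omega)]; norm_num
      rw [hz]
      have hterm : ∀ k ∈ range (n+1),
          ((n+1).choose (k+1) : ℝ) * a^(k+1) * b^(n+2-(k+1)) * H (k+1) x * H (n+2-(k+1)) y
          = ((n+1).choose (k+1) : ℝ) * a^(k+1) * b^(n+1-k) * H (k+1) x * H (n+1-k) y := by
        intro k hk
        rw [show n+2-(k+1) = n+1-k from by omega]
      rw [Finset.sum_congr rfl hterm]
      simp only [Nat.choose_zero_right, Nat.choose_self, Nat.succ_sub_succ, Nat.sub_zero]
      ring
    rw [hC]; ring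
  rw [hB, hD]
  linear_combination hAC + (((n:ℝ)+1) * ∑ m ∈ range (n+1), (n.choose m : ℝ) * a^m * b^(n-m) * H m x * H (n-m) y) * hab

lemma key (a b x y : ℝ) (hab : a^2 + b^2 = 1) (n : ℕ) :
    H n (a*x + b*y) = ∑ m ∈ range (n+1),
      (n.choose m : ℝ) * a^m * b^(n-m) * H m x * H (n-m) y := by
  induction n using Nat.twoStepInduction with
  | zero => simp [H]
  | one => simp [Finset.sum_range_succ, H]; ring
  | more n ih1 ih2 =>
    rw [H_succ_succ, ih1, ih2, ← sum_step a b x y hab n]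

theorem hermite_addition_formula (n : ℕ) (a x y : ℝ) (ha : a ^ 2 ≤ 1) :
    H n (a * x + Real.sqrt (1 - a ^ 2) * y)
      = ∑ m ∈ Finset.range (n + 1),
          (n.choose m : ℝ) * a ^ m *
            (1 - a ^ 2) ^ (((n : ℝ) - m) / 2) * H m x * H (n - m) y := by
  have h1a : (0:ℝ) ≤ 1 - a^2 := by linarith
  have hab : a^2 + Real.sqrt (1 - a^2) ^ 2 = 1 := by
    rw [Real.sq_sqrt h1a]; ring
  rw [key a (Real.sqrt (1 - a^2)) x y hab n]
  refine Finset.sum_congr rfl fun m hm => ?_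
  have hm' : m ≤ n := by simpa [Nat.lt_succ_iff] using hm
  have hpow : (1 - a^2) ^ (((n:ℝ) - m)/2) = Real.sqrt (1 - a^2) ^ (n - m) := by
    rw [show ((n:ℝ) - m) = ((n - m : ℕ) : ℝ) by push_cast [Nat.cast_sub hm']; ring,
        Real.sqrt_eq_rpow, ← Real.rpow_natCast ((1 - a^2) ^ ((1:ℝ)/2)) (n - m),
        ← Real.rpow_mul h1a]
    congr 1
    ring
  rw [hpow]
end

section
/- Let g(x; y, ρ) = (1/√(2π(1−ρ²))) exp(−(x−ρy)²/(2(1−ρ²))) for |ρ| < 1. Then for every n ≥ 0 and every real y, ∫_{−∞}^{∞} Hₙ(x) g(x; y, ρ) dx = ρⁿ Hₙ(y). -/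
open Real MeasureTheory

section Aux

open Filter Polynomial Topology

@[simp] lemma H_zero (x : ℝ) : H 0 x = 1 := rfl
@[simp] lemma H_one (x : ℝ) : H 1 x = x := rfl
lemma H_add_two (n : ℕ) (x : ℝ) :
    H (n + 2) x = x * H (n + 1) x - (n + 1) * H n x := rfl

lemma H_poly (n : ℕ) : ∃ p : ℝ[X], ∀ x, H n x = p.eval x := by
  induction n using Nat.twoStepInduction with
  | zero => exact ⟨1, by simp⟩
  | one => exact ⟨X, by simp⟩
  | more n ih1 ih2 =>
    obtain ⟨p, hp⟩ := ih1
    obtain ⟨q, hq⟩ := ih2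
    refine ⟨X * q - C ((n : ℝ) + 1) * p, fun x => ?_⟩
    simp only [H_add_two, hp, hq, eval_sub, eval_mul, eval_X, eval_C]

lemma H_hasDerivAt (n : ℕ) (x : ℝ) :
    HasDerivAt (H (n + 1)) (((n : ℝ) + 1) * H n x) x := by
  induction n using Nat.twoStepInduction generalizing x with
  | zero =>
    have : (H 1) = fun x : ℝ => x := funext fun x => rfl
    rw [this]
    exact (hasDerivAt_id' x).congr_deriv (by simp)
  | one =>
    have h : (H 2) = fun x : ℝ => x * x - 1 := funext fun x => by
      simp [H_add_two]
    rw [h]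
    have := ((hasDerivAt_id x).mul (hasDerivAt_id x)).sub_const 1
    refine this.congr_deriv ?_
    simp only [H_one, id_eq, Nat.cast_one]; ring
  | more m ih1 ih2 =>
    have h : (H (m + 3)) = fun x : ℝ => x * H (m + 2) x - ((m : ℝ) + 2) * H (m + 1) x :=
      funext fun x => by rw [show m + 3 = (m + 1) + 2 from rfl, H_add_two]; push_cast; ring_nf
    rw [h]
    have hd := ((hasDerivAt_id x).mul (ih2 x)).sub ((ih1 x).const_mul ((m : ℝ) + 2))
    refine hd.congr_deriv ?_
    simp only [id_eq, one_mul]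
    rw [H_add_two]
    push_cast
    ring

lemma integrable_pow_gauss0 {b : ℝ} (hb : 0 < b) (k : ℕ) :
    Integrable (fun x : ℝ => x ^ k * Real.exp (-x ^ 2 / (2 * b))) := by
  have h4b : (0 : ℝ) < 1 / (4 * b) := by positivity
  refine ((integrable_exp_neg_mul_sq h4b).const_mul
    ((k.factorial : ℝ) * Real.exp b)).mono'
    ((by fun_prop : Continuous fun x : ℝ => x ^ k * Real.exp (-x ^ 2 / (2 * b))).aestronglyMeasurable)
    (ae_of_all _ fun x => ?_)
  have h1 : |x| ^ k ≤ (k.factorial : ℝ) * Real.exp |x| := by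
    have := Real.pow_div_factorial_le_exp |x| (abs_nonneg x) k
    have hf : (0 : ℝ) < k.factorial := by positivity
    calc |x| ^ k = (|x| ^ k / k.factorial) * k.factorial := by field_simp
    _ ≤ Real.exp |x| * k.factorial := by
        exact mul_le_mul_of_nonneg_right this hf.le
    _ = (k.factorial : ℝ) * Real.exp |x| := by ring
  have h2 : |x| - x ^ 2 / (2 * b) ≤ b - x ^ 2 / (4 * b) := by
    have h2' : (|x| - b) * (4 * b) ≤ x ^ 2 := by
      nlinarith [sq_nonneg (|x| - 2 * b), sq_abs x]
    have h2'' : |x| - b ≤ x ^ 2 / (4 * b) := (le_div_iff₀ (by positivity)).mpr h2'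
    have hx2 : x ^ 2 / (2 * b) = x ^ 2 / (4 * b) + x ^ 2 / (4 * b) := by
      field_simp
      ring
    linarith
  calc ‖x ^ k * Real.exp (-x ^ 2 / (2 * b))‖
      = |x| ^ k * Real.exp (-x ^ 2 / (2 * b)) := by
        rw [norm_mul, norm_pow]
        simp [abs_of_pos (Real.exp_pos _)]
    _ ≤ ((k.factorial : ℝ) * Real.exp |x|) * Real.exp (-x ^ 2 / (2 * b)) := by
        exact mul_le_mul_of_nonneg_right h1 (Real.exp_pos _).le
    _ = (k.factorial : ℝ) * Real.exp (|x| - x ^ 2 / (2 * b)) := by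
        rw [mul_assoc, ← Real.exp_add]; ring_nf
    _ ≤ (k.factorial : ℝ) * Real.exp (b - x ^ 2 / (4 * b)) := by
        have hf : (0 : ℝ) ≤ k.factorial := by positivity
        exact mul_le_mul_of_nonneg_left (Real.exp_le_exp.mpr h2) hf
    _ = (k.factorial : ℝ) * Real.exp b * Real.exp (-(1 / (4 * b)) * x ^ 2) := by
        rw [mul_assoc, ← Real.exp_add]
        congr 1
        field_simp
        ring

lemma integrable_poly_gauss0 {b : ℝ} (hb : 0 < b) (p : ℝ[X]) :
    Integrable (fun x : ℝ => p.eval x * Real.exp (-x ^ 2 / (2 * b))) := by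
  induction p using Polynomial.induction_on' with
  | add p q hp hq => simpa [add_mul] using (hp.add hq : Integrable (fun x : ℝ =>
      p.eval x * Real.exp (-x ^ 2 / (2 * b)) + q.eval x * Real.exp (-x ^ 2 / (2 * b))))
  | monomial k c =>
    simpa [Polynomial.eval_monomial, mul_assoc] using
      (integrable_pow_gauss0 hb k).const_mul c

lemma integrable_poly_gauss {b : ℝ} (hb : 0 < b) (μ : ℝ) (p : ℝ[X]) :
    Integrable (fun x : ℝ => p.eval x * Real.exp (-(x - μ) ^ 2 / (2 * b))) := by
  have h := (integrable_poly_gauss0 hb (p.comp (X + C μ))).comp_sub_right μ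
  refine h.congr ?_
  refine ae_of_all _ fun x => ?_
  simp [Polynomial.eval_comp]

lemma tendsto_poly_gauss0_top {b : ℝ} (hb : 0 < b) (p : ℝ[X]) :
    Tendsto (fun x : ℝ => p.eval x * Real.exp (-x ^ 2 / (2 * b))) atTop (𝓝 0) := by
  apply squeeze_zero_norm' (a := fun x => |p.eval x / Real.exp x|)
  · filter_upwards [eventually_ge_atTop (max (2 * b) 0)] with x hx
    have hx0 : 0 ≤ x := le_trans (le_max_right _ _) hx
    have hx2b : 2 * b ≤ x := le_trans (le_max_left _ _) hx
    have hxx : x ≤ x ^ 2 / (2 * b) := by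
      rw [le_div_iff₀ (by positivity)]
      nlinarith
    have hexp : Real.exp (-x ^ 2 / (2 * b)) ≤ Real.exp (-x) := by
      apply Real.exp_le_exp.mpr
      rw [neg_div]
      linarith
    calc ‖p.eval x * Real.exp (-x ^ 2 / (2 * b))‖
        = |p.eval x| * Real.exp (-x ^ 2 / (2 * b)) := by
          rw [norm_mul]; simp [abs_of_pos (Real.exp_pos _)]
      _ ≤ |p.eval x| * Real.exp (-x) := mul_le_mul_of_nonneg_left hexp (abs_nonneg _)
      _ = |p.eval x / Real.exp x| := by
          rw [abs_div, abs_of_pos (Real.exp_pos x), Real.exp_neg, div_eq_mul_inv]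
  · have := (p.tendsto_div_exp_atTop).abs
    simpa using this

lemma tendsto_poly_gauss_top {b : ℝ} (hb : 0 < b) (μ : ℝ) (p : ℝ[X]) :
    Tendsto (fun x : ℝ => p.eval x * Real.exp (-(x - μ) ^ 2 / (2 * b))) atTop (𝓝 0) := by
  have h := (tendsto_poly_gauss0_top hb (p.comp (X + C μ))).comp
    (tendsto_atTop_add_const_right atTop (-μ) tendsto_id)
  refine h.congr fun x => ?_
  simp [Polynomial.eval_comp, Function.comp, sub_eq_add_neg]

lemma tendsto_poly_gauss_bot {b : ℝ} (hb : 0 < b) (μ : ℝ) (p : ℝ[X]) :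
    Tendsto (fun x : ℝ => p.eval x * Real.exp (-(x - μ) ^ 2 / (2 * b))) atBot (𝓝 0) := by
  have h := (tendsto_poly_gauss_top hb (-μ) (p.comp (-X))).comp tendsto_neg_atBot_atTop
  refine h.congr fun x => ?_
  simp only [Function.comp, Polynomial.eval_comp, Polynomial.eval_neg, Polynomial.eval_X]
  ring_nf

lemma gauss_hasDerivAt {b : ℝ} (hb : 0 < b) (μ : ℝ) (x : ℝ) :
    HasDerivAt (fun x : ℝ => Real.exp (-(x - μ) ^ 2 / (2 * b)))
      (((μ - x) / b) * Real.exp (-(x - μ) ^ 2 / (2 * b))) x := by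
  have h1 : HasDerivAt (fun x : ℝ => -(x - μ) ^ 2 / (2 * b))
      ((μ - x) / b) x := by
    have h0 : HasDerivAt (fun x : ℝ => x - μ) 1 x := (hasDerivAt_id x).sub_const μ
    have := ((h0.pow 2).neg).div_const (2 * b)
    refine this.congr_deriv ?_
    field_simp
    ring
  simpa [mul_comm] using h1.exp

lemma integral_deriv_zero {f f' : ℝ → ℝ} (hd : ∀ x, HasDerivAt f (f' x) x)
    (hi : Integrable f') (hbot : Tendsto f atBot (𝓝 0))
    (htop : Tendsto f atTop (𝓝 0)) : ∫ x, f' x = 0 := by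
  simpa using MeasureTheory.integral_of_hasDerivAt_of_tendsto hd hi hbot htop

end Aux

open Filter Polynomial in
theorem hermite_gaussian_integral (ρ : ℝ) (hρ : |ρ| < 1) (n : ℕ) (y : ℝ) :
    ∫ x : ℝ, H n x *
        ((1 / Real.sqrt (2 * π * (1 - ρ ^ 2))) *
          Real.exp (-(x - ρ * y) ^ 2 / (2 * (1 - ρ ^ 2))))
      = ρ ^ n * H n y := by
  have hb : (0 : ℝ) < 1 - ρ ^ 2 := by
    nlinarith [neg_abs_le ρ, le_abs_self ρ]
  set b : ℝ := 1 - ρ ^ 2 with hbdef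
  set μ : ℝ := ρ * y with hμdef
  have hπb : (0 : ℝ) < 2 * π * b := by positivity
  have hsq : (0 : ℝ) < Real.sqrt (2 * π * b) := Real.sqrt_pos.mpr hπb
  have hgauss : ∫ x : ℝ, Real.exp (-(x - μ) ^ 2 / (2 * b)) = Real.sqrt (2 * π * b) := by
    have h1 : ∫ x : ℝ, Real.exp (-(x - μ) ^ 2 / (2 * b))
        = ∫ x : ℝ, Real.exp (-(1 / (2 * b)) * x ^ 2) := by
      rw [← integral_sub_right_eq_self (fun x => Real.exp (-(1 / (2 * b)) * x ^ 2)) μ]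
      congr 1
      funext x
      congr 1
      field_simp
    rw [h1, integral_gaussian]
    rw [show π / (1 / (2 * b)) = 2 * π * b by field_simp]
  -- the core identity without the normalizing constant
  have core : ∀ m : ℕ, ∫ x : ℝ, H m x * Real.exp (-(x - μ) ^ 2 / (2 * b))
      = ρ ^ m * H m y * Real.sqrt (2 * π * b) := by
    intro m
    induction m using Nat.twoStepInduction with
    | zero =>
      simp only [H_zero, one_mul, pow_zero]
      rw [hgauss]
    | one =>
      have hIe : Integrable (fun x : ℝ => Real.exp (-(x - μ) ^ 2 / (2 * b))) := by
        simpa using integrable_poly_gauss hb μ 1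
      have hIsub : Integrable (fun x : ℝ => (x - μ) * Real.exp (-(x - μ) ^ 2 / (2 * b))) := by
        have := integrable_poly_gauss hb μ (X - C μ)
        simpa using this
      have hzero : ∫ x : ℝ, (x - μ) * Real.exp (-(x - μ) ^ 2 / (2 * b)) = 0 := by
        apply integral_deriv_zero (f := fun x => -b * Real.exp (-(x - μ) ^ 2 / (2 * b)))
        · intro x
          have := (gauss_hasDerivAt hb μ x).const_mul (-b)
          refine this.congr_deriv ?_
          field_simp
          ring
        · exact hIsub
        · have := tendsto_poly_gauss_bot hb μ (C (-b))
          simpa using this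
        · have := tendsto_poly_gauss_top hb μ (C (-b))
          simpa using this
      have hsplit : (fun x : ℝ => H 1 x * Real.exp (-(x - μ) ^ 2 / (2 * b)))
          = fun x : ℝ => (x - μ) * Real.exp (-(x - μ) ^ 2 / (2 * b))
              + μ * Real.exp (-(x - μ) ^ 2 / (2 * b)) := by
        funext x; simp; ring
      rw [hsplit, integral_add hIsub (hIe.const_mul μ), hzero, integral_const_mul, hgauss]
      simp only [H_one]
      rw [hμdef]
      ring
    | more m ih1 ih2 =>
      obtain ⟨p, hp⟩ := H_poly m
      obtain ⟨q, hq⟩ := H_poly (m + 1)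
      -- the derivative of f x = H (m+1) x * e x
      set s : ℝ → ℝ := fun x =>
        (((m : ℝ) + 1) * H m x) * Real.exp (-(x - μ) ^ 2 / (2 * b))
          + H (m + 1) x * (((μ - x) / b) * Real.exp (-(x - μ) ^ 2 / (2 * b))) with hsdef
      have hseq : s = fun x : ℝ =>
          (C ((m : ℝ) + 1) * p + C (1 / b) * (C μ - X) * q).eval x
            * Real.exp (-(x - μ) ^ 2 / (2 * b)) := by
        funext x
        simp [hsdef, hp, hq]
        field_simp
      have hIs : Integrable s := by
        rw [hseq]
        exact integrable_poly_gauss hb μ _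
      have hIHm : Integrable (fun x : ℝ => H m x * Real.exp (-(x - μ) ^ 2 / (2 * b))) := by
        have := integrable_poly_gauss hb μ p
        exact this.congr (ae_of_all _ fun x => by simp only [hp])
      have hIHm1 : Integrable (fun x : ℝ => H (m + 1) x * Real.exp (-(x - μ) ^ 2 / (2 * b))) := by
        have := integrable_poly_gauss hb μ q
        exact this.congr (ae_of_all _ fun x => by simp only [hq])
      have hszero : ∫ x, s x = 0 := by
        apply integral_deriv_zero
          (f := fun x => H (m + 1) x * Real.exp (-(x - μ) ^ 2 / (2 * b)))
        · intro x
          exact (H_hasDerivAt m x).mul (gauss_hasDerivAt hb μ x)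
        · exact hIs
        · have := tendsto_poly_gauss_bot hb μ q
          exact Tendsto.congr (fun x => by simp only [hq]) this
        · have := tendsto_poly_gauss_top hb μ q
          exact Tendsto.congr (fun x => by simp only [hq]) this
      have hsplit : (fun x : ℝ => H (m + 2) x * Real.exp (-(x - μ) ^ 2 / (2 * b)))
          = fun x : ℝ => (μ * (H (m + 1) x * Real.exp (-(x - μ) ^ 2 / (2 * b))) - b * s x)
              + ((b - 1) * ((m : ℝ) + 1)) * (H m x * Real.exp (-(x - μ) ^ 2 / (2 * b))) := by
        funext x
        rw [H_add_two, hsdef]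
        push_cast
        field_simp
        ring
      have hA : Integrable (fun x : ℝ =>
          μ * (H (m + 1) x * Real.exp (-(x - μ) ^ 2 / (2 * b))) - b * s x) :=
        (hIHm1.const_mul μ).sub (hIs.const_mul b)
      rw [hsplit, integral_add hA (hIHm.const_mul _),
          integral_sub (hIHm1.const_mul μ) (hIs.const_mul b),
          integral_const_mul, integral_const_mul, integral_const_mul,
          hszero, ih2, ih1, H_add_two]
      rw [hμdef, hbdef]
      push_cast
      ring
  -- conclude
  have hfinal : (fun x : ℝ => H n x *
        ((1 / Real.sqrt (2 * π * (1 - ρ ^ 2))) *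
          Real.exp (-(x - ρ * y) ^ 2 / (2 * (1 - ρ ^ 2)))))
      = fun x : ℝ => (1 / Real.sqrt (2 * π * b)) *
          (H n x * Real.exp (-(x - μ) ^ 2 / (2 * b))) := by
    funext x
    rw [← hbdef, ← hμdef]
    ring
  rw [hfinal, integral_const_mul, core n]
  field_simp
end
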